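/- If a recursive program P = rec f(x) = e satisfies a ground specification φ under the standard semantics (i.e., substituting P's input-output behavior for the uninterpreted symbol f makes φ true), then for all values v, v' with P(v) evaluating to v' under the standard semantics, the judgment Respects(P(v) ⇓ v', φ) holds: every recursive call performed in the evaluation is consistent with φ. -/

import Mathlib

/-- Values of the simple ML-like language: unit, pairs, sums. -/
inductive Val : Type
  | unit : Val
  | pair : Val → Val → Val
  | inl  : Val → Val
  | inr  : Val → Val

/-- Expressions of the simple ML-like language with a single recursive
function symbol `f` (written `app e` for `f e`) and a single variable `x`. -/
inductive Expr : Type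
  | var    : Expr
  | app    : Expr → Expr
  | unit   : Expr
  | pair   : Expr → Expr → Expr
  | fst    : Expr → Expr
  | snd    : Expr → Expr
  | inl    : Expr → Expr
  | inr    : Expr → Expr
  | unl    : Expr → Expr
  | unr    : Expr → Expr
  | switch : Expr → Expr → Expr → Expr

/-- Standard big-step semantics `e ⇓ v` for the program `rec f(x) = body`,
with `env` the value currently substituted for `x`.  A recursive call
`f e` unfolds `body` at the value of `e`. -/
inductive Eval (body : Expr) : Val → Expr → Val → Prop
  | var {env} : Eval body env .var env
  | app {env e v v'} : Eval body env e v → Eval body v body v' →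
      Eval body env (.app e) v'
  | unit {env} : Eval body env .unit .unit
  | pair {env e1 e2 v1 v2} : Eval body env e1 v1 → Eval body env e2 v2 →
      Eval body env (.pair e1 e2) (.pair v1 v2)
  | fst {env e v1 v2} : Eval body env e (.pair v1 v2) → Eval body env (.fst e) v1
  | snd {env e v1 v2} : Eval body env e (.pair v1 v2) → Eval body env (.snd e) v2
  | inl {env e v} : Eval body env e v → Eval body env (.inl e) (.inl v)
  | inr {env e v} : Eval body env e v → Eval body env (.inr e) (.inr v)
  | unl {env e v} : Eval body env e (.inl v) → Eval body env (.unl e) v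
  | unr {env e v} : Eval body env e (.inr v) → Eval body env (.unr e) v
  | switchL {env e3 e1 e2 v3 v1} : Eval body env e3 (.inl v3) →
      Eval body env e1 v1 → Eval body env (.switch e3 e1 e2) v1
  | switchR {env e3 e1 e2 v3 v2} : Eval body env e3 (.inr v3) →
      Eval body env e2 v2 → Eval body env (.switch e3 e1 e2) v2

/-- A ground specification over the uninterpreted function symbol `f`,
modelled semantically as the set of its models (interpretations of `f`). -/
def Spec : Type := (Val → Val) → Prop

/-- `SAT(φ ∧ f(v) = v')`: the formula `φ` together with `f(v) = v'`
is satisfiable. -/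
def Spec.sat (φ : Spec) (v v' : Val) : Prop := ∃ g : Val → Val, φ g ∧ g v = v'

/-- Angelic big-step semantics `e ⇓^φ v` relative to the ground
specification `φ`: a recursive call `f e` may return any value `v'`
such that `φ ∧ f(v) = v'` is satisfiable, where `e ⇓^φ v`. -/
inductive AEval (φ : Spec) : Val → Expr → Val → Prop
  | var {env} : AEval φ env .var env
  | app {env e v v'} : AEval φ env e v → φ.sat v v' → AEval φ env (.app e) v'
  | unit {env} : AEval φ env .unit .unit
  | pair {env e1 e2 v1 v2} : AEval φ env e1 v1 → AEval φ env e2 v2 →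
      AEval φ env (.pair e1 e2) (.pair v1 v2)
  | fst {env e v1 v2} : AEval φ env e (.pair v1 v2) → AEval φ env (.fst e) v1
  | snd {env e v1 v2} : AEval φ env e (.pair v1 v2) → AEval φ env (.snd e) v2
  | inl {env e v} : AEval φ env e v → AEval φ env (.inl e) (.inl v)
  | inr {env e v} : AEval φ env e v → AEval φ env (.inr e) (.inr v)
  | unl {env e v} : AEval φ env e (.inl v) → AEval φ env (.unl e) v
  | unr {env e v} : AEval φ env e (.inr v) → AEval φ env (.unr e) v
  | switchL {env e3 e1 e2 v3 v1} : AEval φ env e3 (.inl v3) →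
      AEval φ env e1 v1 → AEval φ env (.switch e3 e1 e2) v1
  | switchR {env e3 e1 e2 v3 v2} : AEval φ env e3 (.inr v3) →
      AEval φ env e2 v2 → AEval φ env (.switch e3 e1 e2) v2

/-- `Respects(e ⇓ v, φ)`: the standard big-step semantics, additionally
requiring at every recursive call with argument `v` and result `v'`
that `φ ∧ f(v) = v'` is satisfiable. -/
inductive Respects (φ : Spec) (body : Expr) : Val → Expr → Val → Prop
  | var {env} : Respects φ body env .var env
  | app {env e v v'} : Respects φ body env e v → Respects φ body v body v' →
      φ.sat v v' → Respects φ body env (.app e) v'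
  | unit {env} : Respects φ body env .unit .unit
  | pair {env e1 e2 v1 v2} : Respects φ body env e1 v1 → Respects φ body env e2 v2 →
      Respects φ body env (.pair e1 e2) (.pair v1 v2)
  | fst {env e v1 v2} : Respects φ body env e (.pair v1 v2) →
      Respects φ body env (.fst e) v1
  | snd {env e v1 v2} : Respects φ body env e (.pair v1 v2) →
      Respects φ body env (.snd e) v2
  | inl {env e v} : Respects φ body env e v → Respects φ body env (.inl e) (.inl v)
  | inr {env e v} : Respects φ body env e v → Respects φ body env (.inr e) (.inr v)
  | unl {env e v} : Respects φ body env e (.inl v) → Respects φ body env (.unl e) v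
  | unr {env e v} : Respects φ body env e (.inr v) → Respects φ body env (.unr e) v
  | switchL {env e3 e1 e2 v3 v1} : Respects φ body env e3 (.inl v3) →
      Respects φ body env e1 v1 → Respects φ body env (.switch e3 e1 e2) v1
  | switchR {env e3 e1 e2 v3 v2} : Respects φ body env e3 (.inr v3) →
      Respects φ body env e2 v2 → Respects φ body env (.switch e3 e1 e2) v2

/-- `F` is the (total) standard input-output semantics of the program
`rec f(x) = body`. -/
def Agrees (body : Expr) (F : Val → Val) : Prop := ∀ v, Eval body v body (F v)

/-- `P ⊨ φ`: the program `rec f(x) = body` satisfies the ground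
specification `φ` under the standard semantics, i.e. substituting the
input-output behaviour of the program for `f` makes `φ` true. -/
def Sat (body : Expr) (φ : Spec) : Prop := ∃ F : Val → Val, Agrees body F ∧ φ F

/-- If the program `P = rec f(x) = body` satisfies the ground
specification `φ` under the standard semantics, then for all values `v, v'`
with `P(v)` evaluating to `v'` under the standard semantics, the judgment
`Respects(P(v) ⇓ v', φ)` holds: every recursive call performed in the
evaluation is consistent with `φ`. -/
theorem eval_det_val {body env e v1 v2} (h1 : Eval body env e v1)
    (h2 : Eval body env e v2) : v1 = v2 := by
  induction h1 generalizing v2 with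
  | var => cases h2; rfl
  | app h1a h1b iha ihb => cases h2 with
    | app h2a h2b => exact ihb ((iha h2a) ▸ h2b)
  | unit => cases h2; rfl
  | pair _ _ ih1 ih2 => cases h2 with
    | pair h2a h2b => rw [ih1 h2a, ih2 h2b]
  | fst _ ih => cases h2 with
    | fst h2a => exact (Val.pair.injEq _ _ _ _ ▸ ih h2a).1
  | snd _ ih => cases h2 with
    | snd h2a => exact (Val.pair.injEq _ _ _ _ ▸ ih h2a).2
  | inl _ ih => cases h2 with
    | inl h2a => rw [ih h2a]
  | inr _ ih => cases h2 with
    | inr h2a => rw [ih h2a]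
  | unl _ ih => cases h2 with
    | unl h2a => exact Val.inl.inj (ih h2a)
  | unr _ ih => cases h2 with
    | unr h2a => exact Val.inr.inj (ih h2a)
  | switchL h3 _ ih3 ih1 => cases h2 with
    | switchL h2a h2b => exact ih1 h2b
    | switchR h2a h2b => exact absurd (ih3 h2a) (by simp)
  | switchR h3 _ ih3 ih2 => cases h2 with
    | switchL h2a h2b => exact absurd (ih3 h2a) (by simp)
    | switchR h2a h2b => exact ih2 h2b

theorem eval_respects {φ body} (F : Val → Val) (hA : Agrees body F)
    (hφ : φ F) : ∀ {env e v}, Eval body env e v → Respects φ body env e v := by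
  intro env e v h
  induction h with
  | var => exact .var
  | app h1 h2 ih1 ih2 =>
      exact .app ih1 ih2 ⟨F, hφ, eval_det_val (hA _) h2⟩
  | unit => exact .unit
  | pair _ _ ih1 ih2 => exact .pair ih1 ih2
  | fst _ ih => exact .fst ih
  | snd _ ih => exact .snd ih
  | inl _ ih => exact .inl ih
  | inr _ ih => exact .inr ih
  | unl _ ih => exact .unl ih
  | unr _ ih => exact .unr ih
  | switchL _ _ ih1 ih2 => exact .switchL ih1 ih2
  | switchR _ _ ih1 ih2 => exact .switchR ih1 ih2

theorem sat_implies_respects (φ : Spec) (body : Expr) (hsat : Sat body φ)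
    (v v' : Val) (h : Eval body v body v') : Respects φ body v body v' := by
  obtain ⟨F, hA, hφ⟩ := hsat
  exact eval_respects F hA hφ h
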